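/- Let a, b, c be orientation-preserving homeomorphisms of ℝ (strictly increasing continuous bijections) such that c commutes with both a and b, and c(x) > x for all x ∈ ℝ. Then for all x ∈ ℝ, c⁻¹(c⁻¹(x)) < (a ∘ b ∘ a⁻¹ ∘ b⁻¹)(x) < c(c(x)). -/

import Mathlib

open Equiv

private lemma perm_inv_strictMono (e : Equiv.Perm ℝ) (he : StrictMono ⇑e) :
    StrictMono ⇑e⁻¹ := fun x y h => by
  have := he.lt_iff_lt (a := e⁻¹ x) (b := e⁻¹ y)
  simp only [Equiv.Perm.coe_inv, Equiv.apply_symm_apply] at this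
  exact this.mp h

private lemma perm_pow_strictMono (e : Equiv.Perm ℝ) (he : StrictMono ⇑e) (n : ℕ) :
    StrictMono ⇑(e ^ n) := by
  induction n with
  | zero => simpa using strictMono_id
  | succ k ih =>
      have : (e ^ (k + 1) : Equiv.Perm ℝ) = e * e ^ k := by rw [pow_succ']
      rw [this]
      exact he.comp ih

private lemma perm_zpow_strictMono (e : Equiv.Perm ℝ) (he : StrictMono ⇑e) (k : ℤ) :
    StrictMono ⇑(e ^ k) := by
  cases k with
  | ofNat n => simpa using perm_pow_strictMono e he n
  | negSucc n =>
      rw [zpow_negSucc]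
      exact perm_inv_strictMono _ (perm_pow_strictMono e he (n + 1))

/-- Orbits of a fixed-point-free increasing homeomorphism are unbounded above. -/
private lemma exists_iterate_gt (c : Equiv.Perm ℝ) (hc' : Continuous ⇑c)
    (hcx : ∀ x : ℝ, x < c x) (x y : ℝ) : ∃ n : ℕ, y < (⇑c)^[n] x := by
  by_contra h
  push_neg at h
  have hmono : Monotone fun n : ℕ => (⇑c)^[n] x := by
    apply monotone_nat_of_le_succ
    intro n
    rw [Function.iterate_succ_apply']
    exact (hcx _).le
  have hbdd : BddAbove (Set.range fun n : ℕ => (⇑c)^[n] x) := ⟨y, by rintro _ ⟨n, rfl⟩; exact h n⟩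
  have hlim : Filter.Tendsto (fun n : ℕ => (⇑c)^[n] x) Filter.atTop
      (nhds (⨆ n, (⇑c)^[n] x)) := tendsto_atTop_ciSup hmono hbdd
  set L := ⨆ n, (⇑c)^[n] x with hL
  have hlim2 : Filter.Tendsto (fun n : ℕ => (⇑c)^[n + 1] x) Filter.atTop (nhds L) :=
    hlim.comp (Filter.tendsto_add_atTop_nat 1)
  have hlim3 : Filter.Tendsto (fun n : ℕ => c ((⇑c)^[n] x)) Filter.atTop (nhds (c L)) :=
    (hc'.tendsto L).comp hlim
  have heq : (fun n : ℕ => (⇑c)^[n + 1] x) = fun n : ℕ => c ((⇑c)^[n] x) := by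
    funext n; rw [Function.iterate_succ_apply']
  rw [heq] at hlim2
  exact absurd (tendsto_nhds_unique hlim2 hlim3) (ne_of_lt (hcx L))

/-- For each x there is an integer `n` with `c^n x ≤ t < c^(n+1) x`. -/
private lemma exists_level (c : Equiv.Perm ℝ) (hc : StrictMono ⇑c) (hc' : Continuous ⇑c)
    (hcx : ∀ x : ℝ, x < c x) (x t : ℝ) :
    ∃ n : ℤ, (c ^ n) x ≤ t ∧ t < (c ^ (n + 1)) x := by
  have hmono : StrictMono fun k : ℤ => (c ^ k) x := by
    apply strictMono_int_of_lt_succ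
    intro k
    have : (c ^ (k + 1) : Equiv.Perm ℝ) = c * c ^ k := by rw [add_comm, zpow_one_add]
    rw [this, Equiv.Perm.mul_apply]
    exact hcx _
  -- nonempty
  obtain ⟨m, hm⟩ := exists_iterate_gt c hc' hcx t x
  have hne : (c ^ (-(m : ℤ))) x ≤ t := by
    have h1 : x < (c ^ (m : ℤ)) t := by
      rwa [zpow_natCast, ← Equiv.Perm.iterate_eq_pow]
    by_contra hcon
    push_neg at hcon
    have := perm_zpow_strictMono c hc (m : ℤ) hcon
    rw [← Equiv.Perm.mul_apply, ← zpow_add, add_neg_cancel, zpow_zero] at this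
    simp at this
    exact absurd h1 (not_lt.mpr this.le)
  -- bounded above
  obtain ⟨M, hM⟩ := exists_iterate_gt c hc' hcx x t
  have hub : ∀ k : ℤ, (c ^ k) x ≤ t → k ≤ (M : ℤ) := by
    intro k hk
    by_contra hcon
    push_neg at hcon
    have : (c ^ (M : ℤ)) x < (c ^ k) x := hmono hcon
    rw [zpow_natCast, ← Equiv.Perm.iterate_eq_pow] at this
    linarith [hM, hk]
  obtain ⟨n, hn1, hn2⟩ := Int.exists_greatest_of_bdd (P := fun k => (c ^ k) x ≤ t)
    ⟨(M : ℤ), hub⟩ ⟨-(m : ℤ), hne⟩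
  refine ⟨n, hn1, ?_⟩
  by_contra hcon
  push_neg at hcon
  have := hn2 (n + 1) hcon
  omega

private lemma zpow_comm_apply (c p : Equiv.Perm ℝ) (hpc : p * c = c * p) (k : ℤ) (y : ℝ) :
    p ((c ^ k) y) = (c ^ k) (p y) := by
  have hcomm : Commute p (c ^ k) := Commute.zpow_right (hpc : Commute p c) k
  have h : p * c ^ k = c ^ k * p := hcomm
  calc p ((c ^ k) y) = (p * c ^ k) y := rfl
    _ = (c ^ k * p) y := by rw [h]
    _ = (c ^ k) (p y) := rfl

/-- Key lemma: for strictly increasing `p`, `q` commuting with `c`,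
`q (p x) < c (c (p (q x)))`. -/
private lemma key (c : Equiv.Perm ℝ) (hc : StrictMono ⇑c) (hc' : Continuous ⇑c)
    (hcx : ∀ x : ℝ, x < c x) (p q : Equiv.Perm ℝ)
    (hp : StrictMono ⇑p) (hq : StrictMono ⇑q)
    (hpc : p * c = c * p) (hqc : q * c = c * q) (x : ℝ) :
    q (p x) < c (c (p (q x))) := by
  obtain ⟨n, hn1, hn2⟩ := exists_level c hc hc' hcx x (p x)
  obtain ⟨m, hm1, hm2⟩ := exists_level c hc hc' hcx x (q x)
  have h1 : q (p x) < (c ^ (n + m + 2)) x := by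
    calc q (p x) < q ((c ^ (n + 1)) x) := hq hn2
      _ = (c ^ (n + 1)) (q x) := zpow_comm_apply c q hqc _ _
      _ < (c ^ (n + 1)) ((c ^ (m + 1)) x) := perm_zpow_strictMono c hc _ hm2
      _ = (c ^ (n + m + 2)) x := by
          rw [← Equiv.Perm.mul_apply, ← zpow_add]; ring_nf
  have h2 : (c ^ (n + m)) x ≤ p (q x) := by
    calc (c ^ (n + m)) x = (c ^ m) ((c ^ n) x) := by
          rw [← Equiv.Perm.mul_apply, ← zpow_add, add_comm]
      _ ≤ (c ^ m) (p x) := (perm_zpow_strictMono c hc m).monotone hn1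
      _ = p ((c ^ m) x) := (zpow_comm_apply c p hpc _ _).symm
      _ ≤ p (q x) := hp.monotone hm1
  have h3 : (c ^ (n + m + 2)) x = c (c ((c ^ (n + m)) x)) := by
    have : (c ^ (n + m + 2) : Equiv.Perm ℝ) = c * (c * c ^ (n + m)) := by
      rw [show n + m + 2 = 1 + (1 + (n + m)) by ring, zpow_add, zpow_add, zpow_one]
    rw [this, Equiv.Perm.mul_apply, Equiv.Perm.mul_apply]
  calc q (p x) < (c ^ (n + m + 2)) x := h1
    _ = c (c ((c ^ (n + m)) x)) := h3
    _ ≤ c (c (p (q x))) := hc.monotone (hc.monotone h2)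

theorem commutator_bounded_by_square_of_central
    (a b c : Equiv.Perm ℝ)
    (ha : StrictMono ⇑a) (ha' : Continuous ⇑a)
    (hb : StrictMono ⇑b) (hb' : Continuous ⇑b)
    (hc : StrictMono ⇑c) (hc' : Continuous ⇑c)
    (hac : a * c = c * a) (hbc : b * c = c * b)
    (hcx : ∀ x : ℝ, x < c x) :
    ∀ x : ℝ, c⁻¹ (c⁻¹ x) < a (b (a⁻¹ (b⁻¹ x))) ∧ a (b (a⁻¹ (b⁻¹ x))) < c (c x) := by
  have ha_inv : StrictMono ⇑a⁻¹ := perm_inv_strictMono a ha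
  have hb_inv : StrictMono ⇑b⁻¹ := perm_inv_strictMono b hb
  have hac' : a⁻¹ * c = c * a⁻¹ := Commute.inv_left (hac : Commute a c)
  have hbc' : b⁻¹ * c = c * b⁻¹ := Commute.inv_left (hbc : Commute b c)
  intro x
  constructor
  · -- lower bound
    have hk := key c hc hc' hcx a⁻¹ b⁻¹ ha_inv hb_inv hac' hbc' x
    -- b⁻¹ (a⁻¹ x) < c (c (a⁻¹ (b⁻¹ x)))
    have h1 : x < a (b (c (c (a⁻¹ (b⁻¹ x))))) := by
      have := ha (hb hk)
      simpa using this
    -- move c's out: a (b (c (c y))) = c (c (a (b y)))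
    have hbcy : ∀ y : ℝ, b (c y) = c (b y) := fun y => by
      have : (b * c) y = (c * b) y := by rw [hbc]
      simpa using this
    have hacy : ∀ y : ℝ, a (c y) = c (a y) := fun y => by
      have : (a * c) y = (c * a) y := by rw [hac]
      simpa using this
    have hmove : ∀ y : ℝ, a (b (c (c y))) = c (c (a (b y))) := by
      intro y
      rw [hbcy, hbcy, hacy, hacy]
    rw [hmove] at h1
    have h2 := (perm_inv_strictMono c hc) ((perm_inv_strictMono c hc) h1)
    simpa using h2
  · -- upper bound
    have hk := key c hc hc' hcx b a hb ha hbc hac (a⁻¹ (b⁻¹ x))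
    -- a (b (a⁻¹ b⁻¹ x)) < c (c (b (a (a⁻¹ (b⁻¹ x)))))
    simpa using hk
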